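/- Let φ₁: ℝ^n → (−∞,+∞] be proper, closed and continuous on dom(φ₁), and let φ₂: ℝ^n → ℝ be real-valued. Define τ(x) := φ₁(x)/φ₂(x) if x ∈ dom(φ₁) and φ₂(x) ≠ 0, and τ(x) := +∞ otherwise. Let x ∈ dom(τ) with a₁ := φ₁(x) > 0 and a₂ := φ₂(x) > 0. If φ₂ is Lipschitz continuous on a neighborhood of x and the Fréchet subdifferential ∂̂φ₂(z) is nonempty for every z in a neighborhood of x, then ∂τ(x) ⊆ (1/a₂)·(∂φ₁(x) − (a₁/a₂)·∂φ₂(x)) (Minkowski sum/difference of sets); in particular, if ∂τ(x) ≠ ∅ then ∂φ₁(x) ≠ ∅. Moreover, this inclusion holds with equality if φ₂ is continuously differentiable at x. -/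

import Mathlib

open Filter Topology Set
open scoped RealInnerProductSpace Pointwise NNReal

noncomputable section

namespace Paper

variable {E : Type*} [NormedAddCommGroup E] [InnerProductSpace ℝ E]

/-- The effective domain of an extended-real-valued function. -/
def edom (φ : E → EReal) : Set E := {x | φ x ≠ ⊤}

/-- A function with values in `(-∞, +∞]` is proper if it is not identically `+∞`
and never takes the value `-∞`. -/
def Proper (φ : E → EReal) : Prop := (∃ x, φ x ≠ ⊤) ∧ ∀ x, φ x ≠ ⊥

/-- The Fréchet subdifferential of `φ` at `x`. -/
def frSubdiff (φ : E → EReal) (x : E) : Set E :=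
  {y | φ x ≠ ⊤ ∧ 0 ≤ Filter.liminf
      (fun z : E => (φ z - φ x - ((⟪y, z - x⟫ : ℝ) : EReal)) * ((‖z - x‖⁻¹ : ℝ) : EReal))
      (𝓝[≠] x)}

/-- The limiting (Mordukhovich) subdifferential of `φ` at `x`. -/
def limSubdiff (φ : E → EReal) (x : E) : Set E :=
  {y | ∃ u v : ℕ → E,
      Tendsto u atTop (𝓝 x) ∧ Tendsto (fun k => φ (u k)) atTop (𝓝 (φ x)) ∧
      (∀ k, v k ∈ frSubdiff φ (u k)) ∧ Tendsto v atTop (𝓝 y)}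

/-- The convex subdifferential of a real-valued function. -/
def cvxSubdiff (g : E → ℝ) (x : E) : Set E :=
  {y | ∀ z, g x + ⟪y, z - x⟫ ≤ g z}

/-- The convex subdifferential of an extended-real-valued function. -/
def cvxSubdiffE (φ : E → EReal) (x : E) : Set E :=
  {y | ∀ z, φ x + ((⟪y, z - x⟫ : ℝ) : EReal) ≤ φ z}

/-- The Fenchel conjugate of an extended-real-valued function. -/
def fconjE (φ : E → EReal) : E → EReal :=
  fun y => ⨆ x : E, (((⟪x, y⟫ : ℝ) : EReal) - φ x)

/-- The Fenchel conjugate of a real-valued function. -/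
def fconj (g : E → ℝ) : E → EReal := fconjE (fun x => ((g x : ℝ) : EReal))

/-- `φ` satisfies the calmness condition at `x` relative to `A`. -/
def CalmAt (φ : E → EReal) (x : E) (A : Set E) : Prop :=
  ∃ κ : ℝ, 0 < κ ∧ ∃ B ∈ 𝓝 x, ∀ u ∈ B ∩ A,
    φ u ≤ φ x + ((κ * ‖u - x‖ : ℝ) : EReal) ∧ φ x ≤ φ u + ((κ * ‖u - x‖ : ℝ) : EReal)

/-- `φ` satisfies the calmness condition on `A`. -/
def CalmOn (φ : E → EReal) (A : Set E) : Prop := ∀ x ∈ A, CalmAt φ x A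

/-- The Kurdyka–Łojasiewicz property of `φ` at `x`. -/
def KLAt (φ : E → EReal) (x : E) : Prop :=
  ∃ ε > (0 : ℝ), ∃ δ > (0 : ℝ), ∃ ϕ ϕ' : ℝ → ℝ,
    ϕ 0 = 0 ∧ ContinuousOn ϕ (Set.Ico 0 ε) ∧ ConcaveOn ℝ (Set.Ico 0 ε) ϕ ∧
    (∀ s ∈ Set.Ioo (0 : ℝ) ε, HasDerivAt ϕ (ϕ' s) s) ∧
    ContinuousOn ϕ' (Set.Ioo 0 ε) ∧ (∀ s ∈ Set.Ioo (0 : ℝ) ε, 0 < ϕ' s) ∧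
    ∀ z ∈ Metric.ball x δ, φ x < φ z → φ z < φ x + (ε : EReal) →
      1 ≤ ENNReal.ofReal (ϕ' ((φ z).toReal - (φ x).toReal)) *
        EMetric.infEdist (0 : E) (limSubdiff φ z)

/-- The KL property of `φ` at `x` with exponent `θ`. -/
def KLExpAt (φ : E → EReal) (x : E) (θ : ℝ) : Prop :=
  ∃ c > (0 : ℝ), ∃ ε > (0 : ℝ), ∃ δ > (0 : ℝ),
    ∀ z ∈ Metric.ball x δ, φ x < φ z → φ z < φ x + (ε : EReal) →
      ENNReal.ofReal (c * ((φ z).toReal - (φ x).toReal) ^ θ) ≤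
        EMetric.infEdist (0 : E) (limSubdiff φ z)

/-- The (possibly multivalued) proximity operator of `φ`. -/
def proxSet (φ : E → EReal) (u : E) : Set E :=
  {z | ∀ w, φ z + ((‖z - u‖ ^ 2 / 2 : ℝ) : EReal) ≤ φ w + ((‖w - u‖ ^ 2 / 2 : ℝ) : EReal)}

/-- A positive scaling of an extended-real-valued function. -/
def scaleE (α : ℝ) (φ : E → EReal) : E → EReal := fun x => ((α : ℝ) : EReal) * φ x

/-- `h` is locally Lipschitz differentiable on `s`. -/
def LocLipGradOn [CompleteSpace E] (h : E → ℝ) (s : Set E) : Prop :=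
  (∀ x ∈ s, DifferentiableAt ℝ h x) ∧
  ∀ x ∈ s, ∃ U ∈ 𝓝 x, ∃ L : ℝ, ∀ u ∈ U ∩ s, ∀ v ∈ U ∩ s,
    ‖gradient h u - gradient h v‖ ≤ L * ‖u - v‖

/-- The numerator `ζ = f + h`. -/
def zeta (f : E → EReal) (h : E → ℝ) (x : E) : EReal := f x + ((h x : ℝ) : EReal)

/-- `η(x,y) = ⟨x,y⟩ − g^*(y)`. -/
def eta (g : E → ℝ) (x y : E) : EReal := ((⟪x, y⟫ : ℝ) : EReal) - fconj g y

/-- The extended objective of the fractional problem. -/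
def Ffun (f : E → EReal) (g h : E → ℝ) (x : E) : EReal :=
  if g x ≠ 0 ∧ f x ≠ ⊤ then ((((f x).toReal + h x) / g x : ℝ) : EReal) else ⊤

/-- The extended objective of the reformulated problem. -/
def Qfun (f : E → EReal) (g h : E → ℝ) (x y : E) : EReal :=
  if f x ≠ ⊤ ∧ 0 < eta g x y then
    ((((f x).toReal + h x) / (eta g x y).toReal : ℝ) : EReal) else ⊤

/-- Pack a pair into the `ℓ²` product space. -/
def mk2 (x y : E) : WithLp 2 (E × E) := (WithLp.equiv 2 (E × E)).symm (x, y)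

def pr1 (p : WithLp 2 (E × E)) : E := (WithLp.equiv 2 (E × E) p).1

def pr2 (p : WithLp 2 (E × E)) : E := (WithLp.equiv 2 (E × E) p).2

/-- `Q` as a function on the `ℓ²` product space. -/
def Qpair (f : E → EReal) (g h : E → ℝ) (p : WithLp 2 (E × E)) : EReal :=
  Qfun f g h (pr1 p) (pr2 p)

/-- The blanket assumptions of the paper. -/
structure Blanket [CompleteSpace E] (f : E → EReal) (g h : E → ℝ) : Prop where
  f_proper : Proper f
  f_lsc : LowerSemicontinuous f
  f_cont : ContinuousOn f (edom f)
  f_bddBelow : ∃ m : ℝ, ∀ x, (m : EReal) ≤ f x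
  h_lsc : LowerSemicontinuous h
  h_diff : LocLipGradOn h {x | g x ≠ 0}
  g_convex : ConvexOn ℝ Set.univ g
  g_nonneg : ∀ x, 0 ≤ g x
  omega_nonempty : ∃ x, g x ≠ 0
  zeta_nonneg : ∀ x, f x ≠ ⊤ → 0 ≤ zeta f h x

/-- `x` is a critical point of `F`: `0 ∈ ∂̂f(x) + ∇h(x) − F(x)·∂g(x)`. -/
def IsCritF [CompleteSpace E] (f : E → EReal) (g h : E → ℝ) (x : E) : Prop :=
  g x ≠ 0 ∧ f x ≠ ⊤ ∧
  ∃ u ∈ frSubdiff f x, ∃ v ∈ cvxSubdiff g x,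
    u + gradient h x - (Ffun f g h x).toReal • v = 0

/-- The level set `X = {x : F(x) ≤ F(x⁰)}`. -/
def lvlSet (f : E → EReal) (g h : E → ℝ) (x0 : E) : Set E :=
  {x | Ffun f g h x ≤ Ffun f g h x0}

/-- The enlargement `X_{α̲}` of the level set. -/
def Xal (f : E → EReal) (g h : E → ℝ) (x0 : E) (αl : ℝ) : Set E :=
  {z | (Metric.infDist z (lvlSet f g h x0)) ^ 2 ≤ sSup (g '' lvlSet f g h x0) / αl}

/-- The compact set `𝒴 = ∪_{z ∈ X_{α̲}} ∂g(z)`. -/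
def Yset (f : E → EReal) (g h : E → ℝ) (x0 : E) (αl : ℝ) : Set E :=
  ⋃ z ∈ Xal f g h x0 αl, cvxSubdiff g z

/-- The set `S = {(x,y) ∈ X × 𝒴 : η(x,y) > 0}`. -/
def Sset (f : E → EReal) (g h : E → ℝ) (x0 : E) (αl : ℝ) : Set (E × E) :=
  {p | p.1 ∈ lvlSet f g h x0 ∧ p.2 ∈ Yset f g h x0 αl ∧ 0 < eta g p.1 p.2}

/-- The set of accumulation points of a sequence. -/
def accSet {X : Type*} [TopologicalSpace X] (pt : ℕ → X) : Set X :=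
  {p | ∃ σ : ℕ → ℕ, StrictMono σ ∧ Tendsto (pt ∘ σ) atTop (𝓝 p)}

/-- A polyhedral function: its epigraph is a finite intersection of closed half-spaces. -/
def IsPolyhedralFn (φ : E → EReal) : Prop :=
  ∃ (m : ℕ) (w : Fin m → E) (c b : Fin m → ℝ),
    ∀ (x : E) (a : ℝ), (φ x ≤ (a : EReal) ↔ ∀ i, ⟪w i, x⟫ + c i * a ≤ b i)


/-- The quotient function `τ = φ₁/φ₂`. -/
def tau (φ₁ : E → EReal) (φ₂ : E → ℝ) (x : E) : EReal :=
  if φ₁ x ≠ ⊤ ∧ φ₂ x ≠ 0 then (((φ₁ x).toReal / φ₂ x : ℝ) : EReal) else ⊤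

lemma fr_mem_iff (ψ : E → EReal) (hbot : ∀ w, ψ w ≠ ⊥) {z : E} (hz : ψ z ≠ ⊤) (y : E) :
    y ∈ frSubdiff ψ z ↔ ∀ ε : ℝ, 0 < ε →
      ∀ᶠ w in 𝓝[≠] z, ψ w ≠ ⊤ →
        -(ε * ‖w - z‖) ≤ (ψ w).toReal - (ψ z).toReal - ⟪y, w - z⟫ := by
  have hzval : ψ z = (((ψ z).toReal : ℝ) : EReal) := (EReal.coe_toReal hz (hbot z)).symm
  have hne : ∀ᶠ w in 𝓝[≠] z, w ≠ z := by
    filter_upwards [self_mem_nhdsWithin] with w hw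
    exact hw
  have key_fin : ∀ w : E, w ≠ z → ψ w ≠ ⊤ →
      (ψ w - ψ z - ((⟪y, w - z⟫ : ℝ) : EReal)) * ((‖w - z‖⁻¹ : ℝ) : EReal)
        = ((((ψ w).toReal - (ψ z).toReal - ⟪y, w - z⟫) * ‖w - z‖⁻¹ : ℝ) : EReal) := by
    intro w hw hwt
    have h1 : ψ w = (((ψ w).toReal : ℝ) : EReal) := (EReal.coe_toReal hwt (hbot w)).symm
    rw [h1, hzval, ← EReal.coe_sub, ← EReal.coe_sub, ← EReal.coe_mul]
    simp
  have key_top : ∀ w : E, w ≠ z → ψ w = ⊤ →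
      (ψ w - ψ z - ((⟪y, w - z⟫ : ℝ) : EReal)) * ((‖w - z‖⁻¹ : ℝ) : EReal) = ⊤ := by
    intro w hw hwt
    have hs : (0:ℝ) < ‖w - z‖⁻¹ := by
      have : (0:ℝ) < ‖w - z‖ := by
        simpa [norm_pos_iff, sub_eq_zero] using hw
      positivity
    rw [hwt]
    rw [hzval, EReal.top_sub_coe, EReal.top_sub_coe]
    exact EReal.top_mul_coe_of_pos hs
  constructor
  · rintro ⟨-, hlim⟩ ε hε
    have hlt : ((-ε : ℝ) : EReal) < liminf
        (fun w : E => (ψ w - ψ z - ((⟪y, w - z⟫ : ℝ) : EReal)) * ((‖w - z‖⁻¹ : ℝ) : EReal))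
        (𝓝[≠] z) := by
      refine lt_of_lt_of_le ?_ hlim
      exact_mod_cast (by linarith : (-ε : ℝ) < 0)
    have := eventually_lt_of_lt_liminf hlt
    filter_upwards [this, hne] with w hw hwne hwt
    rw [key_fin w hwne hwt] at hw
    have hw' : (-ε : ℝ) < ((ψ w).toReal - (ψ z).toReal - ⟪y, w - z⟫) * ‖w - z‖⁻¹ := by
      exact_mod_cast hw
    have hs : (0:ℝ) < ‖w - z‖ := by simpa [norm_pos_iff, sub_eq_zero] using hwne
    rw [← div_eq_mul_inv] at hw'
    have := (lt_div_iff₀ hs).mp hw'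
    linarith
  · intro h
    refine ⟨hz, ?_⟩
    rw [le_liminf_iff]
    intro b hb
    induction b using EReal.rec with
    | bot =>
      filter_upwards [hne] with w hwne
      rcases eq_or_ne (ψ w) ⊤ with ht | ht
      · rw [key_top w hwne ht]; exact bot_lt_top
      · rw [key_fin w hwne ht]; exact EReal.bot_lt_coe _
    | coe br =>
      have hbr : br < 0 := by exact_mod_cast hb
      filter_upwards [h (-br/2) (by linarith), hne] with w hw hwne
      rcases eq_or_ne (ψ w) ⊤ with ht | ht
      · rw [key_top w hwne ht]; exact EReal.coe_lt_top br
      · rw [key_fin w hwne ht]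
        have hs : (0:ℝ) < ‖w - z‖ := by simpa [norm_pos_iff, sub_eq_zero] using hwne
        have hA := hw ht
        have : br < ((ψ w).toReal - (ψ z).toReal - ⟪y, w - z⟫) * ‖w - z‖⁻¹ := by
          rw [← div_eq_mul_inv, lt_div_iff₀ hs]
          nlinarith
        exact_mod_cast this
    | top => exact absurd hb (by simp)


lemma fr_mem_iff_real (g : E → ℝ) (z y : E) :
    y ∈ frSubdiff (fun w => ((g w : ℝ) : EReal)) z ↔ ∀ ε : ℝ, 0 < ε →
      ∀ᶠ w in 𝓝[≠] z, -(ε * ‖w - z‖) ≤ g w - g z - ⟪y, w - z⟫ := by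
  rw [fr_mem_iff (fun w => ((g w : ℝ) : EReal)) (fun w => by simp) (by simp) y]
  simp only [EReal.toReal_coe]
  constructor
  · intro h ε hε
    filter_upwards [h ε hε] with w hw
    exact hw (by simp)
  · intro h ε hε
    filter_upwards [h ε hε] with w hw _
    exact hw

lemma exists_path_pt {z v : E} (hv : v ≠ 0) {P : E → Prop} (h : ∀ᶠ w in 𝓝[≠] z, P w) :
    ∃ t : ℝ, 0 < t ∧ P (z + t • v) := by
  have htend : Tendsto (fun t : ℝ => z + t • v) (𝓝[>] (0:ℝ)) (𝓝[≠] z) := by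
    rw [tendsto_nhdsWithin_iff]
    constructor
    · have h0 : Tendsto (fun t : ℝ => z + t • v) (𝓝 0) (𝓝 (z + (0:ℝ) • v)) := by
        exact ((tendsto_id.smul_const v).const_add z)
      simpa using h0.mono_left nhdsWithin_le_nhds
    · filter_upwards [self_mem_nhdsWithin] with t (ht : 0 < t)
      simp only [Set.mem_compl_iff, Set.mem_singleton_iff]
      intro hc
      have h2 : t • v = 0 := by
        have : z + t • v - z = 0 := by rw [hc]; simp
        simpa using this
      rcases smul_eq_zero.mp h2 with h3 | h3
      · exact (ne_of_gt ht) h3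
      · exact hv h3
  have := (htend.eventually h).and self_mem_nhdsWithin
  rcases this.exists with ⟨t, hP, ht⟩
  exact ⟨t, ht, hP⟩


lemma norm_le_of_lip {g : E → ℝ} {U : Set E} {K : ℝ≥0} {z y : E} (hU : U ∈ 𝓝 z)
    (hK : LipschitzOnWith K g U)
    (hy : y ∈ frSubdiff (fun w => ((g w : ℝ) : EReal)) z) : ‖y‖ ≤ K := by
  rcases eq_or_ne y 0 with rfl | hy0
  · simpa using K.2
  have hyn : (0:ℝ) < ‖y‖ := norm_pos_iff.mpr hy0
  have key : ∀ ε : ℝ, 0 < ε → ‖y‖ ≤ K + ε := by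
    intro ε hε
    have h1 := (fr_mem_iff_real g z y).mp hy ε hε
    have h2 : ∀ᶠ w in 𝓝[≠] z, w ∈ U := mem_nhdsWithin_of_mem_nhds hU
    obtain ⟨t, ht, hP1, hP2⟩ := exists_path_pt hy0 (h1.and h2)
    set w := z + t • y with hw
    have hd : w - z = t • y := by rw [hw]; abel
    have hdist : dist w z = t * ‖y‖ := by
      rw [dist_eq_norm, hd, norm_smul, Real.norm_eq_abs, abs_of_pos ht]
    have hzin : z ∈ U := mem_of_mem_nhds hU
    have hlips : dist (g w) (g z) ≤ K * dist w z := hK.dist_le_mul w hP2 z hzin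
    have hupper : g w - g z ≤ K * (t * ‖y‖) := by
      rw [hdist] at hlips
      have := le_abs_self (g w - g z)
      rw [← Real.dist_eq] at this
      linarith [this.trans hlips]
    have hinner : ⟪y, w - z⟫ = t * ‖y‖^2 := by
      rw [hd, real_inner_smul_right, real_inner_self_eq_norm_sq]
    rw [hd] at hP1
    have hnorm : ‖t • y‖ = t * ‖y‖ := by
      rw [norm_smul, Real.norm_eq_abs, abs_of_pos ht]
    rw [hnorm] at hP1
    rw [← hd] at hP1
    rw [hinner] at hP1
    -- hP1 : -(ε * (t * ‖y‖)) ≤ g w - g z - t * ‖y‖^2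
    have h3 : t * ‖y‖^2 ≤ (K + ε) * (t * ‖y‖) := by nlinarith
    have h4 : (0:ℝ) < t * ‖y‖ := by positivity
    nlinarith
  by_contra hcon
  push_neg at hcon
  have := key ((‖y‖ - K)/2) (by linarith)
  linarith

lemma grad_mem_fr [CompleteSpace E] {g : E → ℝ} {z gz : E} (h : HasGradientAt g gz z) :
    gz ∈ frSubdiff (fun w => ((g w : ℝ) : EReal)) z := by
  rw [fr_mem_iff_real]
  intro ε hε
  have hlo := (hasGradientAt_iff_isLittleO.mp h).def hε
  filter_upwards [hlo.filter_mono nhdsWithin_le_nhds] with w hw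
  rw [Real.norm_eq_abs] at hw
  have := neg_abs_le (g w - g z - ⟪gz, w - z⟫)
  have h2 : ‖w - z‖ = ‖(fun x' => x' - z) w‖ := rfl
  rw [← h2] at hw
  linarith [abs_le.mp hw |>.1]

lemma fr_eq_grad [CompleteSpace E] {g : E → ℝ} {z gz y : E} (h : HasGradientAt g gz z)
    (hy : y ∈ frSubdiff (fun w => ((g w : ℝ) : EReal)) z) : y = gz := by
  by_contra hne
  have hd0 : y - gz ≠ 0 := sub_ne_zero.mpr hne
  have hdn : (0:ℝ) < ‖y - gz‖ := norm_pos_iff.mpr hd0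
  have key : ∀ ε : ℝ, 0 < ε → ‖y - gz‖ ≤ 2 * ε := by
    intro ε hε
    have h1 := (fr_mem_iff_real g z y).mp hy ε hε
    have hlo := ((hasGradientAt_iff_isLittleO.mp h).def hε).filter_mono
      (nhdsWithin_le_nhds (s := {z}ᶜ))
    obtain ⟨t, ht, hP1, hP2⟩ := exists_path_pt hd0 (h1.and hlo)
    set w := z + t • (y - gz) with hw
    have hd : w - z = t • (y - gz) := by rw [hw]; abel
    have hnorm : ‖w - z‖ = t * ‖y - gz‖ := by
      rw [hd, norm_smul, Real.norm_eq_abs, abs_of_pos ht]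
    have hi1 : ⟪y, w - z⟫ - ⟪gz, w - z⟫ = t * ‖y - gz‖^2 := by
      rw [← inner_sub_left, hd, real_inner_smul_right, real_inner_self_eq_norm_sq]
    have hP2' : |g w - g z - ⟪gz, w - z⟫| ≤ ε * ‖w - z‖ := by
      have h2 : ‖(fun x' => x' - z) w‖ = ‖w - z‖ := rfl
      rw [← Real.norm_eq_abs]
      calc ‖g w - g z - ⟪gz, w - z⟫‖ ≤ ε * ‖(fun x' => x' - z) w‖ := hP2
        _ = ε * ‖w - z‖ := by rw [h2]
    rw [hnorm] at hP1 hP2'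
    have := abs_le.mp hP2'
    have h3 : t * ‖y - gz‖^2 ≤ 2 * ε * (t * ‖y - gz‖) := by nlinarith
    nlinarith [mul_pos ht hdn]
  have := key (‖y - gz‖/4) (by linarith)
  linarith


lemma tau_ne_bot (φ₁ : E → EReal) (φ₂ : E → ℝ) (w : E) : tau φ₁ φ₂ w ≠ ⊥ := by
  unfold tau; split_ifs <;> simp

lemma tau_of {φ₁ : E → EReal} {φ₂ : E → ℝ} {w : E} (h1 : φ₁ w ≠ ⊤) (h2 : φ₂ w ≠ 0) :
    tau φ₁ φ₂ w = (((φ₁ w).toReal / φ₂ w : ℝ) : EReal) := if_pos ⟨h1, h2⟩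

lemma tau_ne_top {φ₁ : E → EReal} {φ₂ : E → ℝ} {w : E} (h : tau φ₁ φ₂ w ≠ ⊤) :
    φ₁ w ≠ ⊤ ∧ φ₂ w ≠ 0 := by
  by_contra hc
  exact h (by unfold tau; rw [if_neg hc])

lemma tendsto_ereal_of_toReal {a : ℕ → EReal} {b : EReal} (ha : ∀ k, a k ≠ ⊤)
    (ha' : ∀ k, a k ≠ ⊥) (hb : b ≠ ⊤) (hb' : b ≠ ⊥)
    (h : Tendsto (fun k => (a k).toReal) atTop (𝓝 b.toReal)) :
    Tendsto a atTop (𝓝 b) := by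
  have h2 : Tendsto (fun k => (((a k).toReal : ℝ) : EReal)) atTop (𝓝 ((b.toReal : ℝ) : EReal)) :=
    (continuous_coe_real_ereal.tendsto _).comp h
  rw [EReal.coe_toReal hb hb'] at h2
  exact h2.congr (fun k => EReal.coe_toReal (ha k) (ha' k))

set_option maxHeartbeats 1000000 in
lemma FR1 {φ₁ : E → EReal} {φ₂ : E → ℝ} (hbot : ∀ v, φ₁ v ≠ ⊥)
    {z : E} (hz : φ₁ z ≠ ⊤) (hz2 : 0 < φ₂ z)
    (hnear : ∀ᶠ v in 𝓝 z, 0 < φ₂ v ∧ (φ₁ v ≠ ⊤ → 0 ≤ (φ₁ v).toReal))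
    (hcont2 : ContinuousAt φ₂ z)
    (hcont1 : Tendsto (fun v => (φ₁ v).toReal) (𝓝[{v | φ₁ v ≠ ⊤}] z) (𝓝 (φ₁ z).toReal))
    {y w : E} (hy : y ∈ frSubdiff (tau φ₁ φ₂) z)
    (hw : w ∈ frSubdiff (fun v => ((φ₂ v : ℝ) : EReal)) z) :
    (φ₂ z) • y + ((φ₁ z).toReal / φ₂ z) • w ∈ frSubdiff φ₁ z := by
  set p : ℝ := (φ₁ z).toReal with hp
  set g : ℝ := φ₂ z with hg
  set t : ℝ := p / g with ht
  have hτz : tau φ₁ φ₂ z = ((t : ℝ) : EReal) := tau_of hz (ne_of_gt hz2)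
  have hτzt : tau φ₁ φ₂ z ≠ ⊤ := by rw [hτz]; exact EReal.coe_ne_top t
  rw [fr_mem_iff φ₁ hbot hz]
  intro ε hε
  set D : ℝ := g + |t| + 1 + ‖w‖ with hD
  have hDpos : 0 < D + 1 := by positivity
  set δ : ℝ := ε / (D + 1) with hδdef
  have hδ : 0 < δ := by positivity
  have hδle : δ * D ≤ ε := by
    rw [hδdef]
    rw [div_mul_eq_mul_div, div_le_iff₀ hDpos]
    nlinarith [abs_nonneg t, norm_nonneg w, hz2]
  have F1 := (fr_mem_iff (tau φ₁ φ₂) (tau_ne_bot φ₁ φ₂) hτzt y).mp hy δ hδ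
  have F2 := (fr_mem_iff_real φ₂ z w).mp hw δ hδ
  have F3 : ∀ᶠ v in 𝓝[≠] z, 0 < φ₂ v ∧ (φ₁ v ≠ ⊤ → 0 ≤ (φ₁ v).toReal) :=
    hnear.filter_mono nhdsWithin_le_nhds
  have F4 : ∀ᶠ v in 𝓝[≠] z, φ₁ v ≠ ⊤ → |(φ₁ v).toReal / φ₂ v - t| ≤ min δ 1 := by
    have htend : Tendsto (fun v => (φ₁ v).toReal / φ₂ v) (𝓝[{v | φ₁ v ≠ ⊤}] z) (𝓝 t) := by
      exact hcont1.div (hcont2.continuousWithinAt) (ne_of_gt hz2)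
    have hmin : (0:ℝ) < min δ 1 := lt_min hδ one_pos
    have h5 := htend.eventually (Metric.ball_mem_nhds t hmin)
    rw [eventually_nhdsWithin_iff] at h5
    have h6 := h5.filter_mono (nhdsWithin_le_nhds (s := ({z}ᶜ : Set E)))
    filter_upwards [h6] with v hv hvt
    have := hv hvt
    rw [Real.dist_eq] at this
    exact this.le
  have hne : ∀ᶠ v in 𝓝[≠] z, v ≠ z := by
    filter_upwards [self_mem_nhdsWithin] with v hv; exact hv
  filter_upwards [F1, F2, F3, F4, hne] with v H1 H2 H3 H4 Hne h1'
  set p' : ℝ := (φ₁ v).toReal with hp'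
  set g' : ℝ := φ₂ v with hg'
  set τ' : ℝ := p' / g' with hτ'
  set s : ℝ := ‖v - z‖ with hs'
  have hg'0 : 0 < g' := H3.1
  have hp'0 : 0 ≤ p' := H3.2 h1'
  have hs : 0 < s := by rw [hs']; simpa [norm_pos_iff, sub_eq_zero] using Hne
  have hτv : tau φ₁ φ₂ v = ((τ' : ℝ) : EReal) := tau_of h1' (ne_of_gt hg'0)
  have H1' : -(δ * s) ≤ τ' - t - ⟪y, v - z⟫ := by
    have := H1 (by rw [hτv]; exact EReal.coe_ne_top τ')
    rw [hτv, hτz] at this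
    simpa using this
  have H4' : |τ' - t| ≤ min δ 1 := H4 h1'
  have hpe : p' = τ' * g' := by rw [hτ', div_mul_cancel₀ _ (ne_of_gt hg'0)]
  have hpe2 : p = t * g := by rw [ht, div_mul_cancel₀ _ (ne_of_gt hz2)]
  have hinner : ⟪g • y + t • w, v - z⟫ = g * ⟪y, v - z⟫ + t * ⟪w, v - z⟫ := by
    rw [inner_add_left, real_inner_smul_left, real_inner_smul_left]
  set X : ℝ := τ' - t - ⟪y, v - z⟫ with hX
  set Y : ℝ := g' - g - ⟪w, v - z⟫ with hY
  have key : p' - p - (g * ⟪y, v - z⟫ + t * ⟪w, v - z⟫)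
      = g * X + τ' * Y + (τ' - t) * ⟪w, v - z⟫ := by
    rw [hX, hY, hpe, hpe2]; ring
  have hτ'0 : 0 ≤ τ' := div_nonneg hp'0 hg'0.le
  have hτ'le : τ' ≤ |t| + 1 := by
    have h7 := (abs_le.mp (H4'.trans (min_le_right δ 1))).2
    have := le_abs_self t
    linarith
  have hτ'δ : |τ' - t| ≤ δ := H4'.trans (min_le_left δ 1)
  have hiw : |⟪w, v - z⟫| ≤ ‖w‖ * s := by
    rw [hs']; exact abs_real_inner_le_norm w (v - z)
  have b1 : -(g * (δ * s)) ≤ g * X := by nlinarith [mul_le_mul_of_nonneg_left H1' hz2.le]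
  have b2 : -((|t| + 1) * (δ * s)) ≤ τ' * Y := by
    rcases le_or_gt 0 Y with hY0 | hY0
    · have h8 : 0 ≤ τ' * Y := mul_nonneg hτ'0 hY0
      have h9 : 0 ≤ (|t| + 1) * (δ * s) := by positivity
      linarith
    · have e1 : (|t| + 1) * Y ≤ τ' * Y := mul_le_mul_of_nonpos_right hτ'le hY0.le
      have e2 : (|t| + 1) * (-(δ * s)) ≤ (|t| + 1) * Y :=
        mul_le_mul_of_nonneg_left H2 (by positivity)
      have e3 : (|t| + 1) * (-(δ * s)) = -((|t| + 1) * (δ * s)) := by ring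
      linarith
  have b3 : -(δ * (‖w‖ * s)) ≤ (τ' - t) * ⟪w, v - z⟫ := by
    have habs : |(τ' - t) * ⟪w, v - z⟫| ≤ δ * (‖w‖ * s) := by
      rw [abs_mul]
      exact mul_le_mul hτ'δ hiw (abs_nonneg _) hδ.le
    linarith [neg_abs_le ((τ' - t) * ⟪w, v - z⟫)]
  have hsum : g * (δ * s) + (|t| + 1) * (δ * s) + δ * (‖w‖ * s) ≤ ε * s := by
    have h10 : (δ * D) * s ≤ ε * s := mul_le_mul_of_nonneg_right hδle hs.le
    calc g * (δ * s) + (|t| + 1) * (δ * s) + δ * (‖w‖ * s) = (δ * D) * s := by rw [hD]; ring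
      _ ≤ ε * s := h10
  rw [hinner]
  linarith [key, b1, b2, b3, hsum]


set_option maxHeartbeats 1000000 in
lemma FR2 [CompleteSpace E] {φ₁ : E → EReal} {φ₂ : E → ℝ} (hbot : ∀ v, φ₁ v ≠ ⊥)
    {z : E} (hz : φ₁ z ≠ ⊤) (hz2 : 0 < φ₂ z)
    {gz : E} (hdiff : HasGradientAt φ₂ gz z)
    {u : E} (hu : u ∈ frSubdiff φ₁ z) :
    (φ₂ z)⁻¹ • (u - ((φ₁ z).toReal / φ₂ z) • gz) ∈ frSubdiff (tau φ₁ φ₂) z := by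
  set p : ℝ := (φ₁ z).toReal with hp
  set g : ℝ := φ₂ z with hg
  set t : ℝ := p / g with ht
  set y : E := g⁻¹ • (u - t • gz) with hy
  set W : ℝ := ‖u - t • gz‖ with hW
  have hτz : tau φ₁ φ₂ z = ((t : ℝ) : EReal) := tau_of hz (ne_of_gt hz2)
  have hτzt : tau φ₁ φ₂ z ≠ ⊤ := by rw [hτz]; exact EReal.coe_ne_top t
  rw [fr_mem_iff (tau φ₁ φ₂) (tau_ne_bot φ₁ φ₂) hτzt]
  intro ε hε
  set D : ℝ := 2/g + |t| * (2/g) + W with hD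
  have hDpos : 0 < D + 1 := by positivity
  set δ : ℝ := ε / (D + 1) with hδdef
  have hδ : 0 < δ := by positivity
  have hδle : δ * D ≤ ε := by
    rw [hδdef, div_mul_eq_mul_div, div_le_iff₀ hDpos]
    nlinarith [hD, abs_nonneg t, norm_nonneg (u - t • gz), hz2, div_nonneg (by norm_num : (0:ℝ) ≤ 2) hz2.le]
  have hcontg : ContinuousAt φ₂ z := hdiff.hasFDerivAt.continuousAt
  have G1 := (fr_mem_iff φ₁ hbot hz u).mp hu δ hδ
  have G2 : ∀ᶠ v in 𝓝[≠] z, |φ₂ v - g - ⟪gz, v - z⟫| ≤ δ * ‖v - z‖ := by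
    have hlo := ((hasGradientAt_iff_isLittleO.mp hdiff).def hδ).filter_mono
      (nhdsWithin_le_nhds (s := ({z}ᶜ : Set E)))
    filter_upwards [hlo] with v hv
    have h2 : ‖(fun x' => x' - z) v‖ = ‖v - z‖ := rfl
    rw [← Real.norm_eq_abs]
    calc ‖φ₂ v - g - ⟪gz, v - z⟫‖ ≤ δ * ‖(fun x' => x' - z) v‖ := hv
      _ = δ * ‖v - z‖ := by rw [h2]
  have G3 : ∀ᶠ v in 𝓝[≠] z, g/2 < φ₂ v := by
    have := hcontg.eventually (eventually_gt_nhds (by linarith : g/2 < g))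
    exact this.filter_mono nhdsWithin_le_nhds
  have G4 : ∀ᶠ v in 𝓝[≠] z, |1/(φ₂ v) - 1/g| ≤ δ := by
    have htendinv : Tendsto (fun v => 1/(φ₂ v)) (𝓝 z) (𝓝 (1/g)) := by
      simpa [one_div] using hcontg.tendsto.inv₀ (ne_of_gt hz2)
    have h5 := htendinv.eventually (Metric.ball_mem_nhds (1/g) hδ)
    filter_upwards [h5.filter_mono nhdsWithin_le_nhds] with v hv
    rw [Real.dist_eq] at hv
    exact hv.le
  have hne : ∀ᶠ v in 𝓝[≠] z, v ≠ z := by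
    filter_upwards [self_mem_nhdsWithin] with v hv; exact hv
  filter_upwards [G1, G2, G3, G4, hne] with v H1 H2 H3 H4 Hne htv
  obtain ⟨h1', h2'⟩ := tau_ne_top htv
  set p' : ℝ := (φ₁ v).toReal with hp'
  set g' : ℝ := φ₂ v with hg'
  set τ' : ℝ := p' / g' with hτ'
  set s : ℝ := ‖v - z‖ with hs'
  have hg'0 : 0 < g' := lt_trans (by linarith) H3
  have hs : 0 < s := by rw [hs']; simpa [norm_pos_iff, sub_eq_zero] using Hne
  have hτv : tau φ₁ φ₂ v = ((τ' : ℝ) : EReal) := tau_of h1' (ne_of_gt hg'0)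
  rw [hτv, hτz]
  simp only [EReal.toReal_coe]
  set A : ℝ := p' - p - ⟪u, v - z⟫ with hA
  set B : ℝ := g' - g - ⟪gz, v - z⟫ with hB
  set C : ℝ := ⟪u, v - z⟫ - t * ⟪gz, v - z⟫ with hC
  have HA : -(δ * s) ≤ A := H1 h1'
  have HB : |B| ≤ δ * s := H2
  have HC : |C| ≤ W * s := by
    have : C = ⟪u - t • gz, v - z⟫ := by
      rw [hC, inner_sub_left, real_inner_smul_left]
    rw [this, hW, hs']
    exact abs_real_inner_le_norm _ _
  have hyinner : ⟪y, v - z⟫ = g⁻¹ * C := by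
    rw [hy, real_inner_smul_left, hC, inner_sub_left, real_inner_smul_left]
  have hident : τ' - t - ⟪y, v - z⟫
      = A * (1/g') - (t * B) * (1/g') + C * (1/g' - 1/g) := by
    rw [hyinner, hτ', hA, hB, hC, ht]
    field_simp
    ring
  have h1g' : 1/g' ≤ 2/g := by
    have h6 : 1/g' ≤ 1/(g/2) := one_div_le_one_div_of_le (by linarith) H3.le
    have h7 : 1/(g/2) = 2/g := by field_simp
    linarith
  have hg'inv : (0:ℝ) < 1/g' := by positivity
  have c1 : -((2/g) * (δ * s)) ≤ A * (1/g') := by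
    rcases le_or_gt 0 A with hA0 | hA0
    · have : 0 ≤ A * (1/g') := mul_nonneg hA0 hg'inv.le
      have h8 : 0 ≤ (2/g) * (δ * s) := by positivity
      linarith
    · have e1 : A * (2/g) ≤ A * (1/g') := mul_le_mul_of_nonpos_left h1g' hA0.le
      have e2 : (-(δ * s)) * (2/g) ≤ A * (2/g) :=
        mul_le_mul_of_nonneg_right HA (by positivity)
      have e3 : (-(δ * s)) * (2/g) = -((2/g) * (δ * s)) := by ring
      linarith
  have c2 : -((|t| * (2/g)) * (δ * s)) ≤ -((t * B) * (1/g')) := by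
    have habs : |(t * B) * (1/g')| ≤ (|t| * (2/g)) * (δ * s) := by
      rw [abs_mul, abs_mul]
      have e4 : |t| * |B| ≤ |t| * (δ * s) := mul_le_mul_of_nonneg_left HB (abs_nonneg t)
      have e5 : |1/g'| = 1/g' := abs_of_pos hg'inv
      rw [e5]
      calc |t| * |B| * (1/g') ≤ (|t| * (δ * s)) * (1/g') :=
            mul_le_mul_of_nonneg_right e4 hg'inv.le
        _ ≤ (|t| * (δ * s)) * (2/g) := by
            apply mul_le_mul_of_nonneg_left h1g'
            positivity
        _ = (|t| * (2/g)) * (δ * s) := by ring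
    linarith [neg_abs_le ((t * B) * (1/g')), abs_le.mp habs |>.2]
  have c3 : -(W * (δ * s)) ≤ C * (1/g' - 1/g) := by
    have habs : |C * (1/g' - 1/g)| ≤ W * (δ * s) := by
      rw [abs_mul]
      calc |C| * |1/g' - 1/g| ≤ (W * s) * δ :=
            mul_le_mul HC H4 (abs_nonneg _) (by positivity)
        _ = W * (δ * s) := by ring
    linarith [neg_abs_le (C * (1/g' - 1/g))]
  have hsum : (2/g) * (δ * s) + (|t| * (2/g)) * (δ * s) + W * (δ * s) ≤ ε * s := by
    have h10 : (δ * D) * s ≤ ε * s := mul_le_mul_of_nonneg_right hδle hs.le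
    calc (2/g) * (δ * s) + (|t| * (2/g)) * (δ * s) + W * (δ * s) = (δ * D) * s := by
          rw [hD]; ring
      _ ≤ ε * s := h10
  linarith [hident, c1, c2, c3, hsum]



set_option maxHeartbeats 2000000 in
/-- Quotient rule for the limiting subdifferential of `τ = φ₁/φ₂`. -/
theorem statement0 {n : ℕ} (φ₁ : EuclideanSpace ℝ (Fin n) → EReal)
    (φ₂ : EuclideanSpace ℝ (Fin n) → ℝ)
    (hproper : Proper φ₁) (hclosed : LowerSemicontinuous φ₁)
    (hcont : ContinuousOn φ₁ (edom φ₁))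
    (x : EuclideanSpace ℝ (Fin n))
    (hx₁ : φ₁ x ≠ ⊤) (hx₂ : φ₂ x ≠ 0)
    (ha₁ : (0 : EReal) < φ₁ x) (ha₂ : 0 < φ₂ x)
    (hlip : ∃ U ∈ 𝓝 x, ∃ K : ℝ≥0, LipschitzOnWith K φ₂ U)
    (hfr : ∀ᶠ z in 𝓝 x, (frSubdiff (fun w => ((φ₂ w : ℝ) : EReal)) z).Nonempty) :
    (limSubdiff (tau φ₁ φ₂) x ⊆
        (φ₂ x)⁻¹ • (limSubdiff φ₁ x -
          ((φ₁ x).toReal / φ₂ x) • limSubdiff (fun w => ((φ₂ w : ℝ) : EReal)) x) ∧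
      ((limSubdiff (tau φ₁ φ₂) x).Nonempty → (limSubdiff φ₁ x).Nonempty)) ∧
    (((∀ᶠ z in 𝓝 x, DifferentiableAt ℝ φ₂ z) ∧ ContinuousAt (gradient φ₂) x) →
      limSubdiff (tau φ₁ φ₂) x =
        (φ₂ x)⁻¹ • (limSubdiff φ₁ x -
          ((φ₁ x).toReal / φ₂ x) • limSubdiff (fun w => ((φ₂ w : ℝ) : EReal)) x)) := by
  classical
  have hfin : ∀ v, φ₁ v ≠ ⊥ := hproper.2
  set a2 : ℝ := φ₂ x with ha2def
  set a1 : ℝ := (φ₁ x).toReal with ha1def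
  set c : ℝ := a1 / a2 with hcdef
  obtain ⟨U, hU, K, hK⟩ := hlip
  set U' : Set (EuclideanSpace ℝ (Fin n)) := interior U with hU'def
  have hU' : U' ∈ 𝓝 x := interior_mem_nhds.mpr hU
  have hK' : LipschitzOnWith K φ₂ U' := hK.mono interior_subset
  have hcont2at : ∀ z ∈ U', ContinuousAt φ₂ z := fun z hz =>
    hK'.continuousOn.continuousAt (isOpen_interior.mem_nhds hz)
  have hcont2 : ContinuousAt φ₂ x := hcont2at x (mem_interior_iff_mem_nhds.mpr hU)
  have hP : ∀ᶠ v in 𝓝 x, 0 < φ₂ v ∧ (φ₁ v ≠ ⊤ → 0 ≤ (φ₁ v).toReal) := by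
    have h1 : ∀ᶠ v in 𝓝 x, 0 < φ₂ v := hcont2.eventually (eventually_gt_nhds ha₂)
    have h2 : ∀ᶠ v in 𝓝 x, (0 : EReal) < φ₁ v := hclosed x 0 ha₁
    filter_upwards [h1, h2] with v hv1 hv2
    refine ⟨hv1, fun hvt => ?_⟩
    have := EReal.coe_toReal hvt (hfin v)
    rw [← this] at hv2
    exact_mod_cast hv2.le
  have hPP : ∀ᶠ z in 𝓝 x, ∀ᶠ v in 𝓝 z, 0 < φ₂ v ∧ (φ₁ v ≠ ⊤ → 0 ≤ (φ₁ v).toReal) :=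
    hP.eventually_nhds
  have hU'ev : ∀ᶠ z in 𝓝 x, z ∈ U' := hU'
  have hcont1At : ∀ z, φ₁ z ≠ ⊤ →
      Tendsto (fun v => (φ₁ v).toReal) (𝓝[{v | φ₁ v ≠ ⊤}] z) (𝓝 (φ₁ z).toReal) := by
    intro z hz
    exact (EReal.tendsto_toReal hz (hfin z)).comp (hcont z hz)
  have hτx : tau φ₁ φ₂ x = ((c : ℝ) : EReal) := tau_of hx₁ hx₂
  have hτxt : tau φ₁ φ₂ x ≠ ⊤ := by rw [hτx]; exact EReal.coe_ne_top c
  have hτxtr : (tau φ₁ φ₂ x).toReal = c := by rw [hτx]; exact EReal.toReal_coe c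
  -- the main inclusion
  have hInc : limSubdiff (tau φ₁ φ₂) x ⊆
      (φ₂ x)⁻¹ • (limSubdiff φ₁ x -
        ((φ₁ x).toReal / φ₂ x) • limSubdiff (fun w => ((φ₂ w : ℝ) : EReal)) x) := by
    rintro y ⟨u0, v0, hu0, hτ0, hv0, hvt0⟩
    have hGood : ∀ᶠ z in 𝓝 x, z ∈ U' ∧
        (frSubdiff (fun w => ((φ₂ w : ℝ) : EReal)) z).Nonempty ∧
        (∀ᶠ v in 𝓝 z, 0 < φ₂ v ∧ (φ₁ v ≠ ⊤ → 0 ≤ (φ₁ v).toReal)) :=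
      hU'ev.and (hfr.and hPP)
    obtain ⟨N, hN⟩ := eventually_atTop.mp (hu0.eventually hGood)
    set u : ℕ → (EuclideanSpace ℝ (Fin n)) := fun k => u0 (k + N) with hudef
    set v : ℕ → (EuclideanSpace ℝ (Fin n)) := fun k => v0 (k + N) with hvdef
    have hshift : Tendsto (fun k : ℕ => k + N) atTop atTop := tendsto_add_atTop_nat N
    have hu : Tendsto u atTop (𝓝 x) := hu0.comp hshift
    have hτu : Tendsto (fun k => tau φ₁ φ₂ (u k)) atTop (𝓝 (tau φ₁ φ₂ x)) := hτ0.comp hshift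
    have hv : ∀ k, v k ∈ frSubdiff (tau φ₁ φ₂) (u k) := fun k => hv0 (k + N)
    have hvt : Tendsto v atTop (𝓝 y) := hvt0.comp hshift
    have hGk : ∀ k, u k ∈ U' ∧
        (frSubdiff (fun w => ((φ₂ w : ℝ) : EReal)) (u k)).Nonempty ∧
        (∀ᶠ w in 𝓝 (u k), 0 < φ₂ w ∧ (φ₁ w ≠ ⊤ → 0 ≤ (φ₁ w).toReal)) :=
      fun k => hN (k + N) (Nat.le_add_left N k)
    have htopk : ∀ k, φ₁ (u k) ≠ ⊤ ∧ φ₂ (u k) ≠ 0 := fun k => tau_ne_top (hv k).1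
    have hposk : ∀ k, 0 < φ₂ (u k) := fun k => (mem_of_mem_nhds (hGk k).2.2).1
    set w : ℕ → (EuclideanSpace ℝ (Fin n)) := fun k => ((hGk k).2.1).some with hwdef
    have hwk : ∀ k, w k ∈ frSubdiff (fun v => ((φ₂ v : ℝ) : EReal)) (u k) :=
      fun k => ((hGk k).2.1).some_mem
    have hwb : ∀ k, w k ∈ Metric.closedBall (0 : EuclideanSpace ℝ (Fin n)) K := by
      intro k
      rw [Metric.mem_closedBall, dist_zero_right]
      exact norm_le_of_lip (isOpen_interior.mem_nhds (hGk k).1) hK' (hwk k)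
    obtain ⟨wl, -, σ, hσmono, hσtend⟩ :=
      tendsto_subseq_of_bounded Metric.isBounded_closedBall hwb
    have hσ : Tendsto σ atTop atTop := hσmono.tendsto_atTop
    have huσ : Tendsto (u ∘ σ) atTop (𝓝 x) := hu.comp hσ
    have hwl : wl ∈ limSubdiff (fun w => ((φ₂ w : ℝ) : EReal)) x := by
      refine ⟨u ∘ σ, w ∘ σ, huσ, ?_, fun k => hwk (σ k), hσtend⟩
      exact (continuous_coe_real_ereal.tendsto _).comp (hcont2.tendsto.comp huσ)
    have hτr : Tendsto (fun k => (tau φ₁ φ₂ (u k)).toReal) atTop (𝓝 c) := by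
      have := (EReal.tendsto_toReal hτxt (tau_ne_bot φ₁ φ₂ x)).comp hτu
      rwa [hτxtr] at this
    have hg : Tendsto (fun k => φ₂ (u k)) atTop (𝓝 a2) := hcont2.tendsto.comp hu
    have hτval : ∀ k, (tau φ₁ φ₂ (u k)).toReal = (φ₁ (u k)).toReal / φ₂ (u k) := by
      intro k
      rw [tau_of (htopk k).1 (htopk k).2, EReal.toReal_coe]
    have hscal : Tendsto (fun k => (φ₁ (u k)).toReal / φ₂ (u k)) atTop (𝓝 c) := by
      refine hτr.congr fun k => ?_
      rw [hτval k]
    have hpconv : Tendsto (fun k => (φ₁ (u k)).toReal) atTop (𝓝 a1) := by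
      have h1 : Tendsto (fun k => (φ₁ (u k)).toReal / φ₂ (u k) * φ₂ (u k)) atTop
          (𝓝 (c * a2)) := hscal.mul hg
      have h2 : c * a2 = a1 := div_mul_cancel₀ a1 (ne_of_gt ha₂)
      rw [h2] at h1
      refine h1.congr fun k => ?_
      rw [div_mul_cancel₀ _ (htopk k).2]
    have h1t : Tendsto (fun k => φ₁ (u k)) atTop (𝓝 (φ₁ x)) :=
      tendsto_ereal_of_toReal (fun k => (htopk k).1) (fun k => hfin _) hx₁ (hfin x) hpconv
    set uSeq : ℕ → (EuclideanSpace ℝ (Fin n)) := fun k => φ₂ (u (σ k)) • v (σ k) +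
      ((φ₁ (u (σ k))).toReal / φ₂ (u (σ k))) • w (σ k) with huSeq
    have hFR : ∀ k, uSeq k ∈ frSubdiff φ₁ (u (σ k)) := by
      intro k
      exact FR1 hfin (htopk (σ k)).1 (hposk (σ k)) (hGk (σ k)).2.2
        (hcont2at _ (hGk (σ k)).1) (hcont1At _ (htopk (σ k)).1) (hv (σ k)) (hwk (σ k))
    have huSeqt : Tendsto uSeq atTop (𝓝 (a2 • y + c • wl)) := by
      refine Tendsto.add ?_ ?_
      · exact (hg.comp hσ).smul (hvt.comp hσ)
      · exact (hscal.comp hσ).smul hσtend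
    have hul : a2 • y + c • wl ∈ limSubdiff φ₁ x :=
      ⟨u ∘ σ, uSeq, huσ, h1t.comp hσ, hFR, huSeqt⟩
    refine ⟨(a2 • y + c • wl) - c • wl, Set.sub_mem_sub hul (Set.smul_mem_smul_set hwl), ?_⟩
    rw [add_sub_cancel_right]
    exact inv_smul_smul₀ (ne_of_gt ha₂) y
  refine ⟨⟨hInc, ?_⟩, ?_⟩
  · rintro ⟨y, hy⟩
    obtain ⟨m, hm, -⟩ := hInc hy
    obtain ⟨a, ha, b, hb, -⟩ := Set.mem_sub.mp hm
    exact ⟨a, ha⟩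
  · rintro ⟨hdev, hgc⟩
    have hB1 : limSubdiff (fun w => ((φ₂ w : ℝ) : EReal)) x = {gradient φ₂ x} := by
      apply Set.Subset.antisymm
      · rintro yb ⟨us, vs, hus, -, hvs, hvt⟩
        have hev : ∀ᶠ k in atTop, DifferentiableAt ℝ φ₂ (us k) := hus.eventually hdev
        have hgt : Tendsto (fun k => gradient φ₂ (us k)) atTop (𝓝 (gradient φ₂ x)) :=
          hgc.tendsto.comp hus
        have heq : ∀ᶠ k in atTop, gradient φ₂ (us k) = vs k :=
          hev.mono fun k hk => (fr_eq_grad hk.hasGradientAt (hvs k)).symm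
        have : Tendsto vs atTop (𝓝 (gradient φ₂ x)) := hgt.congr' heq
        simpa using tendsto_nhds_unique hvt this
      · intro yb hyb
        rw [Set.mem_singleton_iff] at hyb
        subst hyb
        have hdx : DifferentiableAt ℝ φ₂ x := hdev.self_of_nhds
        exact ⟨fun _ => x, fun _ => gradient φ₂ x, tendsto_const_nhds, tendsto_const_nhds,
          fun k => grad_mem_fr hdx.hasGradientAt, tendsto_const_nhds⟩
    apply Set.Subset.antisymm hInc
    rintro el ⟨m, hm, rfl⟩
    obtain ⟨uu, huu, bb, hbb, rfl⟩ := Set.mem_sub.mp hm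
    obtain ⟨wb, hwb, rfl⟩ := hbb
    rw [hB1, Set.mem_singleton_iff] at hwb
    subst hwb
    obtain ⟨us, vs, hus, h1s, hvs, hvt⟩ := huu
    have hGood2 : ∀ᶠ z in 𝓝 x, z ∈ U' ∧ DifferentiableAt ℝ φ₂ z ∧ 0 < φ₂ z := by
      filter_upwards [hU'ev, hdev, hP] with z h1 h2 h3
      exact ⟨h1, h2, h3.1⟩
    obtain ⟨N, hN⟩ := eventually_atTop.mp (hus.eventually hGood2)
    set us' : ℕ → (EuclideanSpace ℝ (Fin n)) := fun k => us (k + N) with hus'def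
    set vs' : ℕ → (EuclideanSpace ℝ (Fin n)) := fun k => vs (k + N) with hvs'def
    have hshift : Tendsto (fun k : ℕ => k + N) atTop atTop := tendsto_add_atTop_nat N
    have hus'' : Tendsto us' atTop (𝓝 x) := hus.comp hshift
    have h1s' : Tendsto (fun k => φ₁ (us' k)) atTop (𝓝 (φ₁ x)) := h1s.comp hshift
    have hvs'' : ∀ k, vs' k ∈ frSubdiff φ₁ (us' k) := fun k => hvs (k + N)
    have hvt' : Tendsto vs' atTop (𝓝 uu) := hvt.comp hshift
    have hGk : ∀ k, us' k ∈ U' ∧ DifferentiableAt ℝ φ₂ (us' k) ∧ 0 < φ₂ (us' k) :=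
      fun k => hN (k + N) (Nat.le_add_left N k)
    have htopk : ∀ k, φ₁ (us' k) ≠ ⊤ := fun k => (hvs'' k).1
    set y2 : ℕ → (EuclideanSpace ℝ (Fin n)) := fun k => (φ₂ (us' k))⁻¹ •
      (vs' k - ((φ₁ (us' k)).toReal / φ₂ (us' k)) • gradient φ₂ (us' k)) with hy2def
    have hy2mem : ∀ k, y2 k ∈ frSubdiff (tau φ₁ φ₂) (us' k) := by
      intro k
      exact FR2 hfin (htopk k) (hGk k).2.2 ((hGk k).2.1).hasGradientAt (hvs'' k)
    have hpconv : Tendsto (fun k => (φ₁ (us' k)).toReal) atTop (𝓝 a1) :=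
      (EReal.tendsto_toReal hx₁ (hfin x)).comp h1s'
    have hgconv : Tendsto (fun k => φ₂ (us' k)) atTop (𝓝 a2) := hcont2.tendsto.comp hus''
    have hscal : Tendsto (fun k => (φ₁ (us' k)).toReal / φ₂ (us' k)) atTop (𝓝 c) :=
      hpconv.div hgconv (ne_of_gt ha₂)
    have hτconv : Tendsto (fun k => tau φ₁ φ₂ (us' k)) atTop (𝓝 (tau φ₁ φ₂ x)) := by
      rw [hτx]
      have h6 : Tendsto (fun k => (((φ₁ (us' k)).toReal / φ₂ (us' k) : ℝ) : EReal)) atTop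
          (𝓝 ((c : ℝ) : EReal)) := (continuous_coe_real_ereal.tendsto _).comp hscal
      refine h6.congr fun k => ?_
      rw [← tau_of (htopk k) (ne_of_gt (hGk k).2.2)]
    have hy2t : Tendsto y2 atTop (𝓝 ((φ₂ x)⁻¹ • (uu - c • gradient φ₂ x))) := by
      refine Tendsto.smul (hgconv.inv₀ (ne_of_gt ha₂)) ?_
      exact hvt'.sub (hscal.smul (hgc.tendsto.comp hus''))
    exact ⟨us', y2, hus'', hτconv, hy2mem, hy2t⟩
end Paper
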